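/- The expected value of the coordinate d_1 with respect to the uniform measure on the 3-dimensional polytope P_6(1) = {(d_1,d_2,d_3) ∈ ℝ³ : 0 ≤ d_1 ≤ 2, 0 ≤ d_3 ≤ 2, |d_1−d_2| ≤ 1 ≤ d_1+d_2, |d_2−d_3| ≤ 1 ≤ d_2+d_3} equals 7/6, and the expected value of d_2 equals 5/4. -/

import Mathlib

open MeasureTheory

/-- The fan triangulation moment polytope for equilateral hexagons:
`P_6(1) = {(d₁,d₂,d₃) : 0 ≤ d₁ ≤ 2, 0 ≤ d₃ ≤ 2, |d₁−d₂| ≤ 1 ≤ d₁+d₂,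
|d₂−d₃| ≤ 1 ≤ d₂+d₃}`. -/
def hexagonPolytope : Set (Fin 3 → ℝ) :=
  {d | 0 ≤ d 0 ∧ d 0 ≤ 2 ∧ 0 ≤ d 2 ∧ d 2 ≤ 2 ∧
    |d 0 - d 1| ≤ 1 ∧ 1 ≤ d 0 + d 1 ∧ |d 1 - d 2| ≤ 1 ∧ 1 ≤ d 1 + d 2}

namespace HexAux

noncomputable def φ : (Fin 3 → ℝ) ≃ᵐ ℝ × (ℝ × ℝ) :=
  (MeasurableEquiv.piFinSuccAbove (fun _ : Fin 3 => ℝ) 1).trans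
    ((MeasurableEquiv.refl ℝ).prodCongr MeasurableEquiv.finTwoArrow)

lemma φ_apply (d : Fin 3 → ℝ) : φ d = (d 1, (d 0, d 2)) := by
  simp [φ, MeasurableEquiv.piFinSuccAbove, MeasurableEquiv.finTwoArrow,
    MeasurableEquiv.prodCongr, MeasurableEquiv.trans, Fin.removeNth, Fin.succAbove]

lemma φ_mp : MeasurePreserving φ volume volume := by
  have h1 := volume_preserving_piFinSuccAbove (fun _ : Fin 3 => ℝ) 1
  have h2 := (MeasurePreserving.id (volume : Measure ℝ)).prod (volume_preserving_finTwoArrow ℝ)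
  exact h1.trans (by exact h2)

/-- horizontal slice interval -/
noncomputable def A (t : ℝ) : Set ℝ := Set.Icc |t - 1| (min (t + 1) 2)

/-- image of the polytope under `φ`, with decoupled slices -/
noncomputable def T : Set (ℝ × ℝ × ℝ) := {q | q.2.1 ∈ A q.1 ∧ q.2.2 ∈ A q.1}

/-- slice width (clipped at 0) -/
noncomputable def Lp (t : ℝ) : ℝ := max (min (t + 1) 2 - |t - 1|) 0

lemma hexagon_eq_preimage : hexagonPolytope = φ ⁻¹' T := by
  ext d
  simp only [hexagonPolytope, T, A, Set.mem_setOf_eq, Set.mem_preimage, φ_apply,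
    Set.mem_Icc, abs_le, le_min_iff, abs_sub_le_iff]
  constructor
  · rintro ⟨h1, h2, h3, h4, ⟨h5, h6⟩, h7, ⟨h8, h9⟩, h10⟩
    refine ⟨⟨⟨?_, ?_⟩, ?_, ?_⟩, ⟨?_, ?_⟩, ?_, ?_⟩ <;> linarith
  · rintro ⟨⟨⟨h1, h2⟩, h3, h4⟩, ⟨h5, h6⟩, h7, h8⟩
    refine ⟨?_, ?_, ?_, ?_, ⟨?_, ?_⟩, ?_, ⟨?_, ?_⟩, ?_⟩ <;> linarith

lemma isClosed_T : IsClosed T := by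
  have : T = {q : ℝ × ℝ × ℝ | |q.1 - 1| ≤ q.2.1} ∩ {q | q.2.1 ≤ min (q.1 + 1) 2} ∩
      ({q | |q.1 - 1| ≤ q.2.2} ∩ {q | q.2.2 ≤ min (q.1 + 1) 2}) := by
    ext q; simp [T, A, Set.mem_Icc]
  rw [this]
  have c1 : Continuous fun q : ℝ × ℝ × ℝ => |q.1 - 1| := (continuous_fst.sub continuous_const).abs
  have c2 : Continuous fun q : ℝ × ℝ × ℝ => min (q.1 + 1) 2 :=
    (continuous_fst.add continuous_const).min continuous_const
  exact (((isClosed_le c1 (continuous_fst.comp continuous_snd)).inter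
    (isClosed_le (continuous_fst.comp continuous_snd) c2)).inter
    ((isClosed_le c1 (continuous_snd.comp continuous_snd)).inter
      (isClosed_le (continuous_snd.comp continuous_snd) c2)))

lemma measurableSet_T : MeasurableSet T := isClosed_T.measurableSet

lemma T_subset_box : T ⊆ Set.Icc ((0 : ℝ), ((0 : ℝ), (0 : ℝ))) (3, (2, 2)) := by
  rintro ⟨t, x, z⟩ ⟨⟨hx1, hx2⟩, hz1, hz2⟩
  have hxa : |t - 1| ≤ 2 := le_trans hx1 (le_trans hx2 (min_le_right _ _))
  have hxb := abs_le.mp hxa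
  have hxc : -|t - 1| ≤ t - 1 := neg_abs_le _
  have hxd : |t - 1| ≤ t + 1 := le_trans hx1 (le_trans hx2 (min_le_left _ _))
  have h0x : (0 : ℝ) ≤ x := le_trans (abs_nonneg _) hx1
  have h0z : (0 : ℝ) ≤ z := le_trans (abs_nonneg _) hz1
  simp only [Set.mem_Icc, Prod.mk_le_mk]
  refine ⟨⟨by linarith, h0x, h0z⟩, by linarith,
    le_trans hx2 (min_le_right _ _), le_trans hz2 (min_le_right _ _)⟩

lemma integrableOn_T {g : ℝ × ℝ × ℝ → ℝ} (hg : Continuous g) : IntegrableOn g T := by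
  exact (hg.integrableOn_Icc).mono_set T_subset_box

lemma Lp_nonneg (t : ℝ) : 0 ≤ Lp t := le_max_right _ _

lemma Lp_eq_zero {t : ℝ} (ht : t ∉ Set.Icc (0 : ℝ) 3) : Lp t = 0 := by
  simp only [Set.mem_Icc, not_and_or, not_le] at ht
  have h1 : 1 - t ≤ |t - 1| := by rw [abs_sub_comm]; exact le_abs_self _
  have h2 : t - 1 ≤ |t - 1| := le_abs_self _
  have : min (t + 1) 2 - |t - 1| ≤ 0 := by
    rcases ht with ht | ht
    · have := min_le_left (t + 1) 2; linarith
    · have := min_le_right (t + 1) 2; linarith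
  exact max_eq_right this

lemma A_empty {t : ℝ} (ht : t ∉ Set.Icc (0 : ℝ) 3) : A t = ∅ := by
  apply Set.Icc_eq_empty
  simp only [Set.mem_Icc, not_and_or, not_le] at ht ⊢
  have h1 : 1 - t ≤ |t - 1| := by rw [abs_sub_comm]; exact le_abs_self _
  have h2 : t - 1 ≤ |t - 1| := le_abs_self _
  rcases ht with ht | ht
  · have := min_le_left (t + 1) 2; linarith
  · have := min_le_right (t + 1) 2; linarith

lemma abs_le_min {t : ℝ} (ht : t ∈ Set.Icc (0 : ℝ) 3) : |t - 1| ≤ min (t + 1) 2 := by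
  obtain ⟨h0, h3⟩ := ht
  exact le_min (abs_le.2 ⟨by linarith, by linarith⟩) (abs_le.2 ⟨by linarith, by linarith⟩)

lemma measurableSet_A (t : ℝ) : MeasurableSet (A t) := measurableSet_Icc

lemma volume_A (t : ℝ) : volume (A t) = ENNReal.ofReal (min (t + 1) 2 - |t - 1|) :=
  Real.volume_Icc

lemma toReal_mul_self (a : ℝ) :
    (ENNReal.ofReal a * ENNReal.ofReal a).toReal = (max a 0) ^ 2 := by
  rcases le_total 0 a with h | h
  · rw [← ENNReal.ofReal_mul h, ENNReal.toReal_ofReal (mul_nonneg h h), max_eq_left h, sq]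
  · rw [ENNReal.ofReal_eq_zero.2 h, zero_mul, max_eq_right h]
    simp

lemma ofReal_mul_self (a : ℝ) :
    ENNReal.ofReal a * ENNReal.ofReal a = ENNReal.ofReal ((max a 0) ^ 2) := by
  rcases le_total 0 a with h | h
  · rw [← ENNReal.ofReal_mul h, max_eq_left h, sq]
  · rw [ENNReal.ofReal_eq_zero.2 h, zero_mul, max_eq_right h]
    simp

lemma slice_eq (t : ℝ) : Prod.mk t ⁻¹' T = A t ×ˢ A t := by
  ext p; simp [T, Set.mem_prod]

lemma continuous_Lp : Continuous Lp := by
  unfold Lp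
  exact (((continuous_id.add continuous_const).min continuous_const).sub
    (continuous_id.sub continuous_const).abs).max continuous_const

/-- generic antiderivative computation for quartic polynomials -/
lemma integral_quartic (a b c d u v : ℝ) :
    ∫ t in u..v, (a + 2 * b * t + 3 * c * t ^ 2 + 4 * d * t ^ 3) =
      (a * v + b * v ^ 2 + c * v ^ 3 + d * v ^ 4) -
        (a * u + b * u ^ 2 + c * u ^ 3 + d * u ^ 4) := by
  have h : ∀ t ∈ Set.uIcc u v,
      HasDerivAt (fun x : ℝ => a * x + b * x ^ 2 + c * x ^ 3 + d * x ^ 4)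
        (a + 2 * b * t + 3 * c * t ^ 2 + 4 * d * t ^ 3) t := by
    intro t _
    have h0 := (hasDerivAt_id t).const_mul a
    have h1 := (hasDerivAt_pow 2 t).const_mul b
    have h2 := (hasDerivAt_pow 3 t).const_mul c
    have h3 := (hasDerivAt_pow 4 t).const_mul d
    refine (((h0.add h1).add h2).add h3).congr_deriv ?_
    push_cast
    ring
  have hc : Continuous fun t : ℝ => a + 2 * b * t + 3 * c * t ^ 2 + 4 * d * t ^ 3 := by
    continuity
  rw [intervalIntegral.integral_eq_sub_of_hasDerivAt h (hc.intervalIntegrable u v)]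

/-- Reduce a real integral of a function vanishing outside `[0,3]` to
an interval integral. -/
lemma integral_eq_intervalIntegral {f : ℝ → ℝ} (hf : ∀ t ∉ Set.Icc (0 : ℝ) 3, f t = 0) :
    ∫ t, f t = ∫ t in (0 : ℝ)..3, f t := by
  have : f = (Set.Icc (0 : ℝ) 3).indicator f := by
    funext t
    by_cases h : t ∈ Set.Icc (0 : ℝ) 3
    · rw [Set.indicator_of_mem h]
    · rw [Set.indicator_of_notMem h, hf t h]
  conv_lhs => rw [this]
  rw [integral_indicator measurableSet_Icc, integral_Icc_eq_integral_Ioc,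
    ← intervalIntegral.integral_of_le (by norm_num : (0 : ℝ) ≤ 3)]


lemma Lp_left {t : ℝ} (h0 : 0 ≤ t) (h1 : t ≤ 1) : Lp t = 2 * t := by
  unfold Lp
  rw [min_eq_left (by linarith), abs_of_nonpos (by linarith),
    show t + 1 - -(t - 1) = 2 * t by ring]
  exact max_eq_left (by linarith)

lemma Lp_right {t : ℝ} (h1 : 1 ≤ t) (h3 : t ≤ 3) : Lp t = 3 - t := by
  unfold Lp
  rw [min_eq_right (by linarith), abs_of_nonneg (by linarith),
    show (2 : ℝ) - (t - 1) = 3 - t by ring]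
  exact max_eq_left (by linarith)

lemma toReal_volume_A (t : ℝ) : (volume (A t)).toReal = Lp t := by
  rw [volume_A]
  rcases le_total 0 (min (t + 1) 2 - |t - 1|) with h | h
  · rw [ENNReal.toReal_ofReal h]; exact (max_eq_left h).symm
  · rw [ENNReal.ofReal_eq_zero.2 h]
    simp [Lp, max_eq_right h]

lemma M_eq {t : ℝ} (ht : t ∈ Set.Icc (0 : ℝ) 3) :
    ∫ x in A t, x ∂volume = ((min (t + 1) 2) ^ 2 - (t - 1) ^ 2) / 2 := by
  unfold A
  rw [MeasureTheory.integral_Icc_eq_integral_Ioc,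
    ← intervalIntegral.integral_of_le (abs_le_min ht), integral_id, sq_abs]

lemma inner_vol (t : ℝ) :
    (volume : Measure (ℝ × ℝ)) (A t ×ˢ A t) = ENNReal.ofReal (Lp t ^ 2) := by
  rw [Measure.volume_eq_prod, Measure.prod_prod, volume_A, ofReal_mul_self]
  rfl

lemma integrable_of_vanish {f : ℝ → ℝ} (hc : Continuous f)
    (hf : ∀ t ∉ Set.Icc (0 : ℝ) 3, f t = 0) : Integrable f := by
  have h : f = (Set.Icc (0 : ℝ) 3).indicator f := by
    funext t
    by_cases h : t ∈ Set.Icc (0 : ℝ) 3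
    · rw [Set.indicator_of_mem h]
    · rw [Set.indicator_of_notMem h, hf t h]
  rw [h]
  exact (integrable_indicator_iff measurableSet_Icc).2 hc.integrableOn_Icc

lemma integral_Lp_sq : ∫ t, Lp t ^ 2 = 4 := by
  rw [integral_eq_intervalIntegral (fun t ht => by rw [Lp_eq_zero ht]; ring),
    ← intervalIntegral.integral_add_adjacent_intervals (a := 0) (b := 1) (c := 3)
      (f := fun t => Lp t ^ 2) ((continuous_Lp.pow 2).intervalIntegrable 0 1)
      ((continuous_Lp.pow 2).intervalIntegrable 1 3)]
  have p1 : (∫ t in (0:ℝ)..1, Lp t ^ 2) =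
      ∫ t in (0:ℝ)..1, (0 + 2 * 0 * t + 3 * (4/3) * t ^ 2 + 4 * 0 * t ^ 3) := by
    apply intervalIntegral.integral_congr
    intro t ht
    rw [Set.uIcc_of_le (by norm_num : (0:ℝ) ≤ 1)] at ht
    dsimp only
    rw [Lp_left ht.1 ht.2]; ring
  have p2 : (∫ t in (1:ℝ)..3, Lp t ^ 2) =
      ∫ t in (1:ℝ)..3, (9 + 2 * (-3) * t + 3 * (1/3) * t ^ 2 + 4 * 0 * t ^ 3) := by
    apply intervalIntegral.integral_congr
    intro t ht
    rw [Set.uIcc_of_le (by norm_num : (1:ℝ) ≤ 3)] at ht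
    dsimp only
    rw [Lp_right ht.1 ht.2]; ring
  rw [p1, p2, integral_quartic, integral_quartic]
  norm_num

lemma volume_T : (volume : Measure (ℝ × ℝ × ℝ)) T = ENNReal.ofReal 4 := by
  rw [Measure.volume_eq_prod, Measure.prod_apply measurableSet_T]
  simp only [slice_eq, inner_vol]
  rw [← MeasureTheory.ofReal_integral_eq_lintegral_ofReal
    (integrable_of_vanish (f := fun t => Lp t ^ 2) (continuous_Lp.pow 2) (fun t ht => by rw [Lp_eq_zero ht]; ring))
    (Filter.Eventually.of_forall fun t => sq_nonneg _), integral_Lp_sq]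

lemma volume_hex : volume hexagonPolytope = ENNReal.ofReal 4 := by
  rw [hexagon_eq_preimage]
  exact (φ_mp.measure_preimage measurableSet_T.nullMeasurableSet).trans volume_T

lemma integral_d1 : (∫ q in T, q.1 ∂(volume : Measure (ℝ × ℝ × ℝ))) = 5 := by
  rw [Measure.volume_eq_prod, ← integral_indicator measurableSet_T]
  have hint : Integrable (T.indicator fun q : ℝ × ℝ × ℝ => q.1)
      ((volume : Measure ℝ).prod (volume : Measure (ℝ × ℝ))) := by
    rw [← Measure.volume_eq_prod]
    exact (integrable_indicator_iff measurableSet_T).2 (integrableOn_T continuous_fst)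
  rw [MeasureTheory.integral_prod _ hint]
  have hin : ∀ t : ℝ, (∫ y, T.indicator (fun q : ℝ × ℝ × ℝ => q.1) (t, y)
      ∂(volume : Measure (ℝ × ℝ))) = Lp t ^ 2 * t := by
    intro t
    have h1 : (fun y : ℝ × ℝ => T.indicator (fun q : ℝ × ℝ × ℝ => q.1) (t, y))
        = (A t ×ˢ A t).indicator (fun _ => t) := by
      funext y
      by_cases h : y ∈ A t ×ˢ A t
      · rw [Set.indicator_of_mem h, Set.indicator_of_mem (by rw [← slice_eq t] at h; exact h)]
      · rw [Set.indicator_of_notMem h, Set.indicator_of_notMem (by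
          rw [← slice_eq t] at h; exact h)]
    rw [h1, integral_indicator ((measurableSet_A t).prod (measurableSet_A t)),
      MeasureTheory.setIntegral_const, measureReal_def, inner_vol, ENNReal.toReal_ofReal (sq_nonneg _),
      smul_eq_mul]
  simp only [hin]
  rw [integral_eq_intervalIntegral (fun t ht => by rw [Lp_eq_zero ht]; ring),
    ← intervalIntegral.integral_add_adjacent_intervals (a := 0) (b := 1) (c := 3)
      (f := fun t => Lp t ^ 2 * t) (((continuous_Lp.pow 2).mul continuous_id').intervalIntegrable 0 1)
      (((continuous_Lp.pow 2).mul continuous_id').intervalIntegrable 1 3)]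
  have p1 : (∫ t in (0:ℝ)..1, Lp t ^ 2 * t) =
      ∫ t in (0:ℝ)..1, (0 + 2 * 0 * t + 3 * 0 * t ^ 2 + 4 * 1 * t ^ 3) := by
    apply intervalIntegral.integral_congr
    intro t ht
    rw [Set.uIcc_of_le (by norm_num : (0:ℝ) ≤ 1)] at ht
    dsimp only
    rw [Lp_left ht.1 ht.2]; ring
  have p2 : (∫ t in (1:ℝ)..3, Lp t ^ 2 * t) =
      ∫ t in (1:ℝ)..3, (0 + 2 * (9/2) * t + 3 * (-2) * t ^ 2 + 4 * (1/4) * t ^ 3) := by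
    apply intervalIntegral.integral_congr
    intro t ht
    rw [Set.uIcc_of_le (by norm_num : (1:ℝ) ≤ 3)] at ht
    dsimp only
    rw [Lp_right ht.1 ht.2]; ring
  rw [p1, p2, integral_quartic, integral_quartic]
  norm_num

lemma integral_d0 : (∫ q in T, q.2.1 ∂(volume : Measure (ℝ × ℝ × ℝ))) = 14 / 3 := by
  rw [Measure.volume_eq_prod, ← integral_indicator measurableSet_T]
  have hint : Integrable (T.indicator fun q : ℝ × ℝ × ℝ => q.2.1)
      ((volume : Measure ℝ).prod (volume : Measure (ℝ × ℝ))) := by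
    rw [← Measure.volume_eq_prod]
    exact (integrable_indicator_iff measurableSet_T).2
      (integrableOn_T (continuous_fst.comp continuous_snd))
  rw [MeasureTheory.integral_prod _ hint]
  have hin : ∀ t : ℝ, (∫ y, T.indicator (fun q : ℝ × ℝ × ℝ => q.2.1) (t, y)
      ∂(volume : Measure (ℝ × ℝ))) = (∫ x in A t, x ∂volume) * Lp t := by
    intro t
    have h1 : (fun y : ℝ × ℝ => T.indicator (fun q : ℝ × ℝ × ℝ => q.2.1) (t, y))
        = (A t ×ˢ A t).indicator (fun y => y.1) := by
      funext y
      by_cases h : y ∈ A t ×ˢ A t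
      · rw [Set.indicator_of_mem h, Set.indicator_of_mem (by rw [← slice_eq t] at h; exact h)]
      · rw [Set.indicator_of_notMem h, Set.indicator_of_notMem (by
          rw [← slice_eq t] at h; exact h)]
    rw [h1, integral_indicator ((measurableSet_A t).prod (measurableSet_A t)),
      Measure.volume_eq_prod]
    have h2 := MeasureTheory.setIntegral_prod_mul (μ := (volume : Measure ℝ))
      (ν := (volume : Measure ℝ)) (fun x : ℝ => x) (fun _ : ℝ => (1 : ℝ)) (A t) (A t)
    simp only [mul_one] at h2
    rw [h2, MeasureTheory.setIntegral_const, measureReal_def, toReal_volume_A, smul_eq_mul, mul_one]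
  simp only [hin]
  rw [integral_eq_intervalIntegral (fun t ht => by rw [Lp_eq_zero ht]; ring)]
  have hcongr : (∫ t in (0:ℝ)..3, (∫ x in A t, x ∂volume) * Lp t) =
      ∫ t in (0:ℝ)..3, ((min (t + 1) 2) ^ 2 - (t - 1) ^ 2) / 2 * Lp t := by
    apply intervalIntegral.integral_congr
    intro t ht
    rw [Set.uIcc_of_le (by norm_num : (0:ℝ) ≤ 3)] at ht
    dsimp only
    rw [M_eq ht]
  rw [hcongr]
  have cE : Continuous fun t : ℝ => ((min (t + 1) 2) ^ 2 - (t - 1) ^ 2) / 2 * Lp t :=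
    (((((continuous_id.add continuous_const).min continuous_const).pow 2).sub
      ((continuous_id.sub continuous_const).pow 2)).div_const 2).mul continuous_Lp
  rw [← intervalIntegral.integral_add_adjacent_intervals (a := 0) (b := 1) (c := 3)
      (cE.intervalIntegrable 0 1) (cE.intervalIntegrable 1 3)]
  have p1 : (∫ t in (0:ℝ)..1, ((min (t + 1) 2) ^ 2 - (t - 1) ^ 2) / 2 * Lp t) =
      ∫ t in (0:ℝ)..1, (0 + 2 * 0 * t + 3 * (4/3) * t ^ 2 + 4 * 0 * t ^ 3) := by
    apply intervalIntegral.integral_congr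
    intro t ht
    rw [Set.uIcc_of_le (by norm_num : (0:ℝ) ≤ 1)] at ht
    dsimp only
    rw [Lp_left ht.1 ht.2, min_eq_left (by linarith [ht.2])]; ring
  have p2 : (∫ t in (1:ℝ)..3, ((min (t + 1) 2) ^ 2 - (t - 1) ^ 2) / 2 * Lp t) =
      ∫ t in (1:ℝ)..3, (9/2 + 2 * (3/4) * t + 3 * (-(5/6)) * t ^ 2 + 4 * (1/8) * t ^ 3) := by
    apply intervalIntegral.integral_congr
    intro t ht
    rw [Set.uIcc_of_le (by norm_num : (1:ℝ) ≤ 3)] at ht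
    dsimp only
    rw [Lp_right ht.1 ht.2, min_eq_right (by linarith [ht.1])]; ring
  rw [p1, p2, integral_quartic, integral_quartic]
  norm_num

lemma setIntegral_hex_d1 : (∫ d in hexagonPolytope, d 1 ∂volume) = 5 := by
  rw [hexagon_eq_preimage,
    show (fun d : Fin 3 → ℝ => d 1) = fun d => (φ d).1 from funext fun d => by rw [φ_apply],
    φ_mp.setIntegral_preimage_emb φ.measurableEmbedding Prod.fst T]
  exact integral_d1

lemma setIntegral_hex_d0 : (∫ d in hexagonPolytope, d 0 ∂volume) = 14 / 3 := by
  rw [hexagon_eq_preimage,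
    show (fun d : Fin 3 → ℝ => d 0) = fun d => (φ d).2.1 from funext fun d => by rw [φ_apply],
    φ_mp.setIntegral_preimage_emb φ.measurableEmbedding (fun q => q.2.1) T]
  exact integral_d0

end HexAux

/-- With respect to the uniform measure on `P_6(1)`, the expected value of `d₁`
equals `7/6` and the expected value of `d₂` equals `5/4`. -/
theorem hexagon_expected_chords :
    (∫ d, d 0 ∂((MeasureTheory.volume hexagonPolytope)⁻¹ •
        MeasureTheory.volume.restrict hexagonPolytope)) = 7 / 6 ∧
    (∫ d, d 1 ∂((MeasureTheory.volume hexagonPolytope)⁻¹ •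
        MeasureTheory.volume.restrict hexagonPolytope)) = 5 / 4 := by
  have hv : (volume hexagonPolytope)⁻¹.toReal = 4⁻¹ := by
    rw [HexAux.volume_hex, ← ENNReal.ofReal_inv_of_pos (by norm_num), ENNReal.toReal_ofReal (by norm_num)]
  constructor
  · rw [integral_smul_measure, hv, HexAux.setIntegral_hex_d0, smul_eq_mul]
    norm_num
  · rw [integral_smul_measure, hv, HexAux.setIntegral_hex_d1, smul_eq_mul]
    norm_num
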